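/- Let A ⊆ ℝ^d be finite, θ̂, θ* ∈ ℝ^d, Σ positive definite, β > 0 with ‖θ̂ − θ*‖_Σ ≤ β, and let C = {x ∈ A : ∀y ∈ A, ⟨x − y, θ̂⟩ + β‖x − y‖_{Σ⁻¹} ≥ 0}. If (x_t, y_t) maximizes ‖x − y‖_{Σ⁻¹} over pairs in C, then 2⟨x*, θ*⟩ − ⟨x_t + y_t, θ*⟩ ≤ 4β‖x_t − y_t‖_{Σ⁻¹}, where x* = argmax_{x∈A}⟨x, θ*⟩. -/

import Mathlib

open Matrix

open scoped MatrixOrder in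
/-- Cauchy–Schwarz for a positive semidefinite quadratic form. -/
lemma psd_cauchy_schwarz {d : ℕ} {M : Matrix (Fin d) (Fin d) ℝ}
    (hM : M.PosSemidef) (v w : Fin d → ℝ) :
    v ⬝ᵥ M *ᵥ w ≤ Real.sqrt (v ⬝ᵥ M *ᵥ v) * Real.sqrt (w ⬝ᵥ M *ᵥ w) := by
  set S := CFC.sqrt M with hSdef
  have hSsym : Sᵀ = S := by
    have h := (CFC.sqrt_nonneg M).posSemidef.isHermitian
    rw [Matrix.IsHermitian, Matrix.conjTranspose_eq_transpose_of_trivial] at h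
    exact h
  have key : ∀ a b : Fin d → ℝ, a ⬝ᵥ M *ᵥ b = (S *ᵥ a) ⬝ᵥ (S *ᵥ b) := by
    intro a b
    have : M *ᵥ b = S *ᵥ (S *ᵥ b) := by
      rw [Matrix.mulVec_mulVec, CFC.sqrt_mul_sqrt_self M hM.nonneg]
    rw [this, Matrix.dotProduct_mulVec, ← Matrix.mulVec_transpose, hSsym]
  rw [key, key, key]
  set a := S *ᵥ v
  set b := S *ᵥ w
  have h1 : (a ⬝ᵥ b) ^ 2 ≤ (a ⬝ᵥ a) * (b ⬝ᵥ b) := by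
    have := Finset.sum_mul_sq_le_sq_mul_sq Finset.univ a b
    simpa [dotProduct, sq] using this
  calc a ⬝ᵥ b ≤ |a ⬝ᵥ b| := le_abs_self _
    _ = Real.sqrt ((a ⬝ᵥ b) ^ 2) := (Real.sqrt_sq_eq_abs _).symm
    _ ≤ Real.sqrt ((a ⬝ᵥ a) * (b ⬝ᵥ b)) := Real.sqrt_le_sqrt h1
    _ = Real.sqrt (a ⬝ᵥ a) * Real.sqrt (b ⬝ᵥ b) := Real.sqrt_mul (by
          simp only [dotProduct]
          exact Finset.sum_nonneg fun i _ => mul_self_nonneg _) _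

/-- Cauchy–Schwarz pairing the `Σ⁻¹` and `Σ` norms. -/
lemma dual_cauchy_schwarz {d : ℕ} {Sig : Matrix (Fin d) (Fin d) ℝ}
    (hSig : Sig.PosDef) (v w : Fin d → ℝ) :
    v ⬝ᵥ w ≤ Real.sqrt (v ⬝ᵥ Sig⁻¹ *ᵥ v) * Real.sqrt (w ⬝ᵥ Sig *ᵥ w) := by
  have hdet : IsUnit Sig.det := isUnit_iff_ne_zero.mpr hSig.det_pos.ne'
  have hinv : Sig⁻¹ * Sig = 1 := Matrix.nonsing_inv_mul Sig hdet
  have h1 : v ⬝ᵥ w = v ⬝ᵥ Sig⁻¹ *ᵥ (Sig *ᵥ w) := by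
    rw [Matrix.mulVec_mulVec, hinv, Matrix.one_mulVec]
  have h2 : (Sig *ᵥ w) ⬝ᵥ Sig⁻¹ *ᵥ (Sig *ᵥ w) = w ⬝ᵥ Sig *ᵥ w := by
    rw [Matrix.mulVec_mulVec, hinv, Matrix.one_mulVec, dotProduct_comm]
  have := psd_cauchy_schwarz hSig.inv.posSemidef v (Sig *ᵥ w)
  rw [h2] at this
  rw [h1]
  exact this

theorem stmt_15 {d : ℕ} (A : Finset (Fin d → ℝ))
    (Sig : Matrix (Fin d) (Fin d) ℝ) (hSig : Sig.PosDef)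
    (β : ℝ) (hβ : 0 < β) (θhat θstar xstar xt yt : Fin d → ℝ)
    (hconc : Real.sqrt ((θhat - θstar) ⬝ᵥ Sig.mulVec (θhat - θstar)) ≤ β)
    (hxstar : xstar ∈ A) (hopt : ∀ x ∈ A, x ⬝ᵥ θstar ≤ xstar ⬝ᵥ θstar)
    (C : Finset (Fin d → ℝ))
    (hC : C = {x ∈ A | ∀ y ∈ A,
      0 ≤ (x - y) ⬝ᵥ θhat + β * Real.sqrt ((x - y) ⬝ᵥ Sig⁻¹.mulVec (x - y))})
    (hxt : xt ∈ C) (hyt : yt ∈ C)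
    (hmax : ∀ x ∈ C, ∀ y ∈ C,
      Real.sqrt ((x - y) ⬝ᵥ Sig⁻¹.mulVec (x - y)) ≤
      Real.sqrt ((xt - yt) ⬝ᵥ Sig⁻¹.mulVec (xt - yt))) :
    2 * (xstar ⬝ᵥ θstar) - (xt + yt) ⬝ᵥ θstar ≤
      4 * β * Real.sqrt ((xt - yt) ⬝ᵥ Sig⁻¹.mulVec (xt - yt)) := by
  set N := Real.sqrt ((xt - yt) ⬝ᵥ Sig⁻¹.mulVec (xt - yt)) with hN
  -- norm of difference with θhat - θstar
  have hneg : ∀ v : Fin d → ℝ, (-v) ⬝ᵥ Sig⁻¹ *ᵥ (-v) = v ⬝ᵥ Sig⁻¹ *ᵥ v := by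
    intro v; simp [Matrix.mulVec_neg]
  have hcs : ∀ v : Fin d → ℝ, v ⬝ᵥ (θhat - θstar) ≤
      Real.sqrt (v ⬝ᵥ Sig⁻¹ *ᵥ v) * β := by
    intro v
    calc v ⬝ᵥ (θhat - θstar)
        ≤ Real.sqrt (v ⬝ᵥ Sig⁻¹ *ᵥ v) *
            Real.sqrt ((θhat - θstar) ⬝ᵥ Sig *ᵥ (θhat - θstar)) :=
          dual_cauchy_schwarz hSig v _
      _ ≤ Real.sqrt (v ⬝ᵥ Sig⁻¹ *ᵥ v) * β :=
          mul_le_mul_of_nonneg_left hconc (Real.sqrt_nonneg _)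
  have hcs' : ∀ v : Fin d → ℝ, v ⬝ᵥ (θstar - θhat) ≤
      Real.sqrt (v ⬝ᵥ Sig⁻¹ *ᵥ v) * β := by
    intro v
    have := hcs (-v)
    rw [hneg] at this
    have hv : (-v) ⬝ᵥ (θhat - θstar) = v ⬝ᵥ (θstar - θhat) := by
      simp [dotProduct_sub, neg_dotProduct]; ring
    linarith [this, hv ▸ this]
  -- xstar ∈ C
  have hxstarC : xstar ∈ C := by
    rw [hC, Finset.mem_filter]
    refine ⟨hxstar, fun y hy => ?_⟩
    have h1 : 0 ≤ (xstar - y) ⬝ᵥ θstar := by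
      have := hopt y hy
      rw [sub_dotProduct]; linarith
    have h2 := hcs' (xstar - y)
    have h3 : (xstar - y) ⬝ᵥ θhat = (xstar - y) ⬝ᵥ θstar - (xstar - y) ⬝ᵥ (θstar - θhat) := by
      rw [dotProduct_sub]; ring
    rw [h3]; linarith
  -- for x in C : (xstar - x) ⬝ θstar ≤ 2 β N
  have key : ∀ x ∈ C, (xstar - x) ⬝ᵥ θstar ≤ 2 * β * N := by
    intro x hxC
    have hxC' := hxC
    rw [hC, Finset.mem_filter] at hxC'
    have hP := hxC'.2 xstar hxstar
    have hflip : (x - xstar) ⬝ᵥ Sig⁻¹ *ᵥ (x - xstar)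
        = (xstar - x) ⬝ᵥ Sig⁻¹ *ᵥ (xstar - x) := by
      have := hneg (xstar - x)
      simpa [neg_sub] using this
    rw [hflip] at hP
    have e1 : (x - xstar) ⬝ᵥ θhat = -((xstar - x) ⬝ᵥ θhat) := by
      rw [sub_dotProduct, sub_dotProduct]; ring
    rw [e1] at hP
    have e2 := hcs' (xstar - x)
    have e3 : (xstar - x) ⬝ᵥ θstar
        = (xstar - x) ⬝ᵥ θhat + (xstar - x) ⬝ᵥ (θstar - θhat) := by
      rw [dotProduct_sub]; ring
    have e4 : Real.sqrt ((xstar - x) ⬝ᵥ Sig⁻¹ *ᵥ (xstar - x)) ≤ N :=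
      hmax xstar hxstarC x hxC
    nlinarith [Real.sqrt_nonneg ((xstar - x) ⬝ᵥ Sig⁻¹ *ᵥ (xstar - x))]
  have k1 := key xt hxt
  have k2 := key yt hyt
  rw [sub_dotProduct] at k1 k2
  rw [add_dotProduct]
  linarith
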